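/- For the quantile representation of a distribution by N equally weighted particles, the 1-Wasserstein distance between the empirical measure (1/N)Σ_{i=1}^N δ_{x_i} and (1/N)Σ_{i=1}^N δ_{y_i}, where x_1 ≤ ... ≤ x_N and y_1 ≤ ... ≤ y_N, equals (1/N)Σ_{i=1}^N |x_i − y_i|. -/

import Mathlib

open MeasureTheory Finset

/-- Generalized inverse CDF (quantile function) of a measure on `ℝ`. -/
noncomputable def quantile (μ : Measure ℝ) (ω : ℝ) : ℝ :=
  sInf {x : ℝ | ω ≤ ProbabilityTheory.cdf μ x}

/-- `1`-Wasserstein distance on measures on `ℝ`, via the quantile-function formula. -/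
noncomputable def W1 (μ ν : Measure ℝ) : ℝ :=
  ∫ ω in Set.Ioo (0:ℝ) 1, |quantile μ ω - quantile ν ω|

lemma emp_isProb {N : ℕ} (hN : 0 < N) (x : Fin N → ℝ) :
    IsProbabilityMeasure (∑ i, ((N : ENNReal))⁻¹ • Measure.dirac (x i)) := by
  constructor
  rw [Measure.finset_sum_apply]
  simp only [Measure.smul_apply, smul_eq_mul, measure_univ, mul_one, Finset.sum_const,
    Finset.card_univ, Fintype.card_fin, nsmul_eq_mul]
  exact ENNReal.mul_inv_cancel (by exact_mod_cast hN.ne') (ENNReal.natCast_ne_top N)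

lemma cdf_emp {N : ℕ} (hN : 0 < N) (x : Fin N → ℝ) (t : ℝ) :
    ProbabilityTheory.cdf (∑ i, ((N : ENNReal))⁻¹ • Measure.dirac (x i)) t
      = ((univ.filter fun j => x j ≤ t).card : ℝ) / N := by
  haveI := emp_isProb hN x
  rw [ProbabilityTheory.cdf_eq_real, measureReal_def, Measure.finset_sum_apply]
  have h1 : ∀ j : Fin N, (((N : ENNReal))⁻¹ • Measure.dirac (x j)) (Set.Iic t)
      = (N : ENNReal)⁻¹ * (if x j ≤ t then 1 else 0) := by
    intro j
    rw [Measure.smul_apply, smul_eq_mul, Measure.dirac_apply' _ measurableSet_Iic]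
    by_cases h : x j ≤ t <;> simp [Set.indicator, Set.mem_Iic, h]
  rw [Finset.sum_congr rfl fun j _ => h1 j, ← Finset.mul_sum, Finset.sum_boole]
  rw [ENNReal.toReal_mul, ENNReal.toReal_inv]
  simp only [ENNReal.toReal_natCast]
  ring

lemma quantile_emp {N : ℕ} (hN : 0 < N) (x : Fin N → ℝ) (hx : Monotone x) (i : Fin N)
    {ω : ℝ} (h1 : (i : ℝ) / N < ω) (h2 : ω ≤ ((i : ℝ) + 1) / N) :
    quantile (∑ i, ((N : ENNReal))⁻¹ • Measure.dirac (x i)) ω = x i := by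
  have hNR : (0 : ℝ) < N := by exact_mod_cast hN
  have hmem : x i ∈ {t : ℝ | ω ≤ ProbabilityTheory.cdf
      (∑ i, ((N : ENNReal))⁻¹ • Measure.dirac (x i)) t} := by
    rw [Set.mem_setOf_eq, cdf_emp hN]
    refine h2.trans ?_
    rw [div_le_div_iff_of_pos_right hNR]
    have hsub : Finset.Iic i ⊆ univ.filter (fun j => x j ≤ x i) := fun j hj =>
      Finset.mem_filter.2 ⟨Finset.mem_univ _, hx (Finset.mem_Iic.1 hj)⟩
    have := Finset.card_le_card hsub
    rw [Fin.card_Iic] at this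
    exact_mod_cast this
  have hlb : ∀ t ∈ {t : ℝ | ω ≤ ProbabilityTheory.cdf
      (∑ i, ((N : ENNReal))⁻¹ • Measure.dirac (x i)) t}, x i ≤ t := by
    intro t ht
    by_contra hlt
    push_neg at hlt
    rw [Set.mem_setOf_eq, cdf_emp hN] at ht
    have hsub : univ.filter (fun j => x j ≤ t) ⊆ Finset.Iio i := by
      intro j hj
      rw [Finset.mem_Iio]
      by_contra hij
      push_neg at hij
      exact absurd ((hx hij).trans (Finset.mem_filter.1 hj).2) (not_le.2 hlt)
    have := Finset.card_le_card hsub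
    rw [Fin.card_Iio] at this
    have hcard : ((univ.filter fun j => x j ≤ t).card : ℝ) ≤ (i : ℝ) := by exact_mod_cast this
    have : ω ≤ (i : ℝ) / N := ht.trans (by rw [div_le_div_iff_of_pos_right hNR]; exact hcard)
    linarith
  exact le_antisymm (csInf_le ⟨x i, hlb⟩ hmem) (le_csInf ⟨x i, hmem⟩ hlb)

/-- For sorted particle representations,
`W₁((1/N)Σ δ_{x_i}, (1/N)Σ δ_{y_i}) = (1/N)Σ |x_i − y_i|`. -/
theorem wasserstein_sorted_particles
    (N : ℕ) (hN : 0 < N) (x y : Fin N → ℝ) (hx : Monotone x) (hy : Monotone y) :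
    W1 (∑ i, ((N : ENNReal))⁻¹ • Measure.dirac (x i))
       (∑ i, ((N : ENNReal))⁻¹ • Measure.dirac (y i)) =
      (1 / (N : ℝ)) * ∑ i, |x i - y i| := by
  have hNR : (0 : ℝ) < N := by exact_mod_cast hN
  set μ := ∑ i, ((N : ENNReal))⁻¹ • Measure.dirac (x i) with hμ
  set ν := ∑ i, ((N : ENNReal))⁻¹ • Measure.dirac (y i) with hν
  set f : ℝ → ℝ := fun ω => |quantile μ ω - quantile ν ω| with hf
  set a : ℕ → ℝ := fun k => (k : ℝ) / N with ha
  set c : ℕ → ℝ := fun k => if h : k < N then |x ⟨k, h⟩ - y ⟨k, h⟩| else 0 with hc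
  -- f is a.e. constant (= c k) on each Ioc (a k) (a (k+1)), k < N
  have key : ∀ k (hk : k < N), ∀ ω ∈ Set.Ioo (a k) (a (k + 1)), f ω = c k := by
    intro k hk ω hω
    have hω1 : ((⟨k, hk⟩ : Fin N) : ℝ) / N < ω := by simpa using hω.1
    have hω2 : ω ≤ (((⟨k, hk⟩ : Fin N) : ℝ) + 1) / N := by
      refine le_of_lt ?_
      simpa [ha] using hω.2
    rw [hf]
    simp only [hμ, hν, quantile_emp hN x hx ⟨k, hk⟩ hω1 hω2,
      quantile_emp hN y hy ⟨k, hk⟩ hω1 hω2, hc, dif_pos hk]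
  have hle : ∀ k : ℕ, a k ≤ a (k + 1) := by
    intro k
    simp only [ha]
    gcongr
    exact_mod_cast Nat.le_succ k
  have hae : ∀ k (hk : k < N),
      f =ᵐ[volume.restrict (Set.Ioc (a k) (a (k + 1)))] fun _ => c k := by
    intro k hk
    rw [← Measure.restrict_congr_set Ioo_ae_eq_Ioc]
    filter_upwards [ae_restrict_mem measurableSet_Ioo] with ω hω
    exact key k hk ω hω
  have hint : ∀ k < N, IntervalIntegrable f volume (a k) (a (k + 1)) := by
    intro k hk
    rw [intervalIntegrable_iff_integrableOn_Ioc_of_le (hle k)]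
    exact (integrableOn_const measure_Ioc_lt_top.ne).congr ((hae k hk).symm)
  have hsum := intervalIntegral.sum_integral_adjacent_intervals hint
  have ha0 : a 0 = 0 := by simp [ha]
  have haN : a N = 1 := by show (N : ℝ) / N = 1; exact div_self hNR.ne'
  -- each piece
  have hpiece : ∀ k ∈ Finset.range N,
      ∫ ω in a k..a (k + 1), f ω = (1 / (N : ℝ)) * c k := by
    intro k hk
    rw [Finset.mem_range] at hk
    rw [intervalIntegral.integral_of_le (hle k), integral_congr_ae (hae k hk),
      setIntegral_const, measureReal_def, Real.volume_Ioc, smul_eq_mul]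
    congr 1
    rw [ENNReal.toReal_ofReal (by linarith [hle k])]
    simp only [ha]
    push_cast
    field_simp
    ring
  rw [Finset.sum_congr rfl hpiece, ha0, haN] at hsum
  have hIooIoc : ∫ ω in (0:ℝ)..1, f ω = ∫ ω in Set.Ioo (0:ℝ) 1, f ω := by
    rw [intervalIntegral.integral_of_le (by norm_num : (0:ℝ) ≤ 1),
      ← Measure.restrict_congr_set Ioo_ae_eq_Ioc]
  have hW : W1 μ ν = ∑ k ∈ Finset.range N, (1 / (N : ℝ)) * c k := by
    rw [W1, ← hIooIoc, ← hsum]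
  rw [hW, ← Finset.mul_sum]
  congr 1
  rw [← Fin.sum_univ_eq_sum_range (fun k => c k) N]
  refine Finset.sum_congr rfl fun i _ => ?_
  simp [hc, i.isLt]
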